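/- Let A be a unital C*-algebra, B ⊆ A a commutative unital C*-subalgebra, E : A → B a conditional expectation onto B, and T ∈ A an element satisfying the B-valued circular moment relations with respect to E. Then for every n ≥ 1 and every ε(1),…,ε(n) ∈ {1,*}, one has E(T^{(ε(1))} T^{(ε(2))} ⋯ T^{(ε(n))}) ≥ 0 in B. -/

import Mathlib

open Filter
open scoped ComplexOrder

section Preamble

variable {A : Type*} [CStarAlgebra A] [PartialOrder A] [StarOrderedRing A]

/-- The absolute value `(a* a)^{1/2}` of an element of a C*-algebra. -/
noncomputable def cabs (a : A) : A := CFC.sqrt (star a * a)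

/-- `E : A → A` is a conditional expectation onto the C*-subalgebra `B`:
it takes values in `B`, fixes `B`, is a `B`-bimodule map, and is positive and contractive. -/
structure IsCondExp (B : StarSubalgebra ℂ A) (E : A →ₗ[ℂ] A) : Prop where
  mem_range : ∀ x : A, E x ∈ B
  fixes : ∀ b ∈ B, E b = b
  bimodule : ∀ b₁ ∈ B, ∀ b₂ ∈ B, ∀ x : A, E (b₁ * x * b₂) = b₁ * E x * b₂
  positive : ∀ x : A, 0 ≤ x → 0 ≤ E x
  contractive : ∀ x : A, ‖E x‖ ≤ ‖x‖

/-- `word T [(ε₁,b₁),…,(εₙ,bₙ)] = T^{ε₁} * b₁ * ⋯ * T^{εₙ} * bₙ`, where `true` stands for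
the exponent `1` and `false` for the exponent `*`. -/
def word (T : A) (l : List (Bool × A)) : A :=
  (l.map (fun p => (cond p.1 T (star T)) * p.2)).prod

/-- A word is balanced when there are as many `*`'s as `1`'s among the exponents. -/
abbrev IsBalanced (l : List (Bool × A)) : Prop :=
  2 * l.countP (fun p => p.1) = l.length

/-- `T` satisfies the `B`-valued circular moment relations with respect to `E`:
the expectation of any unbalanced word vanishes, and the expectation of a nonempty balanced word
`T^{ε₁} b₁ ⋯ T^{εₙ} bₙ` satisfies the moment-cumulant recursion of a `B`-valued circular
element, where the sum runs over those positions `j ∈ {2,…,n}` (here `j = i + 2` for the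
`i`-th entry of the tail, `0`-based) for which `ε_j ≠ ε₁` and the prefix `ε₁,…,ε_j` is
balanced. -/
structure IsBCircular (B : StarSubalgebra ℂ A) (E : A →ₗ[ℂ] A) (T : A) : Prop where
  expect_unbalanced : ∀ l : List (Bool × A), (∀ p ∈ l, p.2 ∈ B) →
    ¬ IsBalanced l → E (word T l) = 0
  expect_cons_one : ∀ b ∈ B, ∀ tl : List (Bool × A), (∀ p ∈ tl, p.2 ∈ B) →
    IsBalanced ((true, b) :: tl) →
    E (word T ((true, b) :: tl)) =
      ∑ i ∈ Finset.range tl.length,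
        if (tl.getD i (true, 1)).1 = false ∧ IsBalanced ((true, b) :: tl.take (i + 1)) then
          E (T * (b * E (word T (tl.take i))) * star T) * (tl.getD i (true, 1)).2 *
            E (word T (tl.drop (i + 1)))
        else 0
  expect_cons_star : ∀ b ∈ B, ∀ tl : List (Bool × A), (∀ p ∈ tl, p.2 ∈ B) →
    IsBalanced ((false, b) :: tl) →
    E (word T ((false, b) :: tl)) =
      ∑ i ∈ Finset.range tl.length,
        if (tl.getD i (true, 1)).1 = true ∧ IsBalanced ((false, b) :: tl.take (i + 1)) then
          E (star T * (b * E (word T (tl.take i))) * T) * (tl.getD i (true, 1)).2 *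
            E (word T (tl.drop (i + 1)))
        else 0

end Preamble

open scoped ComplexOrder in
private lemma my_mul_nonneg_of_commute {A : Type*} [CStarAlgebra A] [PartialOrder A]
    [StarOrderedRing A] {x y : A} (hx : 0 ≤ x) (hy : 0 ≤ y) (h : x * y = y * x) :
    0 ≤ x * y := by
  have hsa : IsSelfAdjoint (x * y) := by
    rw [IsSelfAdjoint, star_mul, (IsSelfAdjoint.of_nonneg hx).star_eq,
      (IsSelfAdjoint.of_nonneg hy).star_eq, h]
  rw [StarOrderedRing.nonneg_iff_spectrum_nonneg (R := ℝ) _ hsa]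
  intro t ht
  set s := CFC.sqrt x with hs
  have hss : s * s = x := CFC.sqrt_mul_sqrt_self x hx
  have hsnn : 0 ≤ s := CFC.sqrt_nonneg (a := x)
  have hconj : 0 ≤ s * y * s := (IsSelfAdjoint.of_nonneg hsnn).conjugate_nonneg hy
  rcases eq_or_ne t 0 with rfl | ht0
  · exact le_refl 0
  · have hmem : t ∈ spectrum ℝ (s * (s * y)) \ {0} := by
      rw [← mul_assoc, hss]; exact ⟨ht, ht0⟩
    rw [spectrum.nonzero_mul_comm] at hmem
    exact spectrum_nonneg_of_nonneg hconj hmem.1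

open scoped ComplexOrder in
private lemma expectation_word_nonneg_aux
    {A : Type*} [CStarAlgebra A] [PartialOrder A] [StarOrderedRing A]
    (B : StarSubalgebra ℂ A)
    (hBcomm : ∀ x ∈ B, ∀ y ∈ B, x * y = y * x)
    (E : A →ₗ[ℂ] A) (hE : IsCondExp B E)
    (T : A) (hT : IsBCircular B E T) :
    ∀ n : ℕ, ∀ l : List Bool, l.length ≤ n →
      0 ≤ E (word T (l.map (fun e => (e, (1 : A))))) := by
  have hmem : ∀ l : List Bool, ∀ p ∈ l.map (fun e => (e, (1 : A))), p.2 ∈ B := by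
    intro l p hp
    obtain ⟨a, -, rfl⟩ := List.mem_map.mp hp
    exact one_mem B
  have hnil : (0 : A) ≤ E (word T (([] : List Bool).map (fun e => (e, (1 : A))))) := by
    have : word T ([] : List (Bool × A)) = 1 := rfl
    simp only [List.map_nil, this, hE.fixes 1 (one_mem B)]
    simpa using star_mul_self_nonneg (1 : A)
  intro n
  induction n with
  | zero =>
    intro l hl
    rw [List.length_eq_zero_iff.mp (Nat.le_zero.mp hl)]
    exact hnil
  | succ n IH =>
    intro l hl
    match l with
    | [] => exact hnil
    | e :: tl =>
      have htl : tl.length ≤ n := by simpa using hl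
      simp only [List.map_cons]
      by_cases hbal : IsBalanced ((e, (1 : A)) :: tl.map (fun e => (e, (1 : A))))
      · have key : ∀ i ∈ Finset.range (tl.map (fun e : Bool => (e, (1 : A)))).length,
            ∀ c : A,
            0 ≤ E (c * ((1 : A) * E (word T ((tl.map (fun e => (e, (1 : A)))).take i))) *
                star c) * ((tl.map (fun e : Bool => (e, (1 : A)))).getD i (true, 1)).2 *
              E (word T ((tl.map (fun e => (e, (1 : A)))).drop (i + 1))) := by
          intro i hi c
          rw [Finset.mem_range, List.length_map] at hi
          rw [List.getD_eq_getElem _ _ (by simpa using hi)]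
          simp only [List.getElem_map, mul_one, ← List.map_take, ← List.map_drop]
          have h1 : 0 ≤ E (word T ((tl.take i).map fun e => (e, (1 : A)))) :=
            IH _ (le_trans (by simp [List.length_take]) htl)
          have h2 : 0 ≤ E (word T ((tl.drop (i + 1)).map fun e => (e, (1 : A)))) :=
            IH _ (le_trans (by simp) htl)
          have hc1 : 0 ≤ c * ((1 : A) * E (word T ((tl.take i).map fun e => (e, (1 : A))))) *
              star c := by
            rw [one_mul]; exact star_right_conjugate_nonneg h1 c
          exact my_mul_nonneg_of_commute (hE.positive _ hc1) h2
            (hBcomm _ (hE.mem_range _) _ (hE.mem_range _))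
        cases e with
        | true =>
          rw [hT.expect_cons_one 1 (one_mem B) _ (hmem tl) hbal]
          refine Finset.sum_nonneg fun i hi => ?_
          split
          · exact key i hi T
          · exact le_refl 0
        | false =>
          rw [hT.expect_cons_star 1 (one_mem B) _ (hmem tl) hbal]
          refine Finset.sum_nonneg fun i hi => ?_
          split
          · have := key i hi (star T)
            rwa [star_star] at this
          · exact le_refl 0
      · exact le_of_eq (hT.expect_unbalanced _ (hmem (e :: tl)) hbal).symm

/-- For a `B`-valued circular element `T` over a commutative unital C*-subalgebra `B`,
the expectation of any word `T^{ε₁} ⋯ T^{εₙ}` (with `n ≥ 1`) is a positive element of `B`. -/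
theorem expectation_word_nonneg
    {A : Type*} [CStarAlgebra A] [PartialOrder A] [StarOrderedRing A]
    (B : StarSubalgebra ℂ A) (hBclosed : IsClosed (B : Set A))
    (hBcomm : ∀ x ∈ B, ∀ y ∈ B, x * y = y * x)
    (E : A →ₗ[ℂ] A) (hE : IsCondExp B E)
    (T : A) (hT : IsBCircular B E T)
    (ε : List Bool) (hε : ε ≠ []) :
    0 ≤ E (word T (ε.map (fun e => (e, (1 : A))))) := by
  exact expectation_word_nonneg_aux B hBcomm E hE T hT ε.length ε le_rfl
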